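/- Let M : ℝ → Matrix (Fin 2) (Fin 2) ℂ be twice differentiable at x₀ and on a neighbourhood of x₀, with det (M x) = 1 for all x near x₀, and suppose M x₀ = ε • (1 : Matrix (Fin 2) (Fin 2) ℂ) for some ε ∈ {1, -1}. Let τ(x) = (1/2)·trace (M x). Then τ'(x₀) = 0 and (M' x₀)² = ε·τ''(x₀) • (1 : Matrix (Fin 2) (Fin 2) ℂ). -/

import Mathlib

attribute [local instance] Matrix.normedAddCommGroup Matrix.normedSpace

noncomputable def entryCLM (i j : Fin 2) : Matrix (Fin 2) (Fin 2) ℂ →L[ℝ] ℂ :=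
  LinearMap.toContinuousLinearMap (Matrix.entryLinearMap ℝ ℂ i j)

@[simp] lemma entryCLM_apply (i j : Fin 2) (A : Matrix (Fin 2) (Fin 2) ℂ) :
    entryCLM i j A = A i j := rfl

lemma diffAt_deriv {f : ℝ → ℂ} {x : ℝ} (hf : ContDiffAt ℝ 2 f x) :
    DifferentiableAt ℝ (deriv f) x := by
  have h1 : ContDiffAt ℝ 1 (fderiv ℝ f) x := hf.fderiv_right (by norm_num)
  have h2 : ContDiffAt ℝ 1 (fun y => fderiv ℝ f y 1) x := h1.clm_apply contDiffAt_const
  exact h2.differentiableAt one_ne_zero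

theorem cayley_hamilton_derivatives (M : ℝ → Matrix (Fin 2) (Fin 2) ℂ) (x₀ : ℝ)
    (hM : ContDiffAt ℝ 2 M x₀)
    (hdet : ∀ᶠ x in nhds x₀, (M x).det = 1)
    (ε : ℂ) (hε : ε = 1 ∨ ε = -1)
    (hM0 : M x₀ = ε • (1 : Matrix (Fin 2) (Fin 2) ℂ)) :
    deriv (fun x => (1 / 2 : ℂ) * (M x).trace) x₀ = 0 ∧
    (deriv M x₀) ^ 2 =
      (ε * deriv (deriv (fun x => (1 / 2 : ℂ) * (M x).trace)) x₀) •
        (1 : Matrix (Fin 2) (Fin 2) ℂ) := by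
  have hε0 : ε ≠ 0 := by rcases hε with h | h <;> simp [h]
  have hMev : ∀ᶠ x in nhds x₀, ContDiffAt ℝ 2 M x := hM.eventually (by norm_num)
  set a : ℝ → ℂ := fun x => M x 0 0 with ha
  set b : ℝ → ℂ := fun x => M x 0 1 with hb
  set c : ℝ → ℂ := fun x => M x 1 0 with hc
  set d : ℝ → ℂ := fun x => M x 1 1 with hd
  have hent : ∀ i j, ∀ᶠ x in nhds x₀, ContDiffAt ℝ 2 (fun t => M t i j) x := by
    intro i j
    filter_upwards [hMev] with x hx
    exact ((entryCLM i j).contDiff.contDiffAt).comp x hx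
  have hentD : ∀ i j, ∀ᶠ x in nhds x₀,
      HasDerivAt (fun t => M t i j) (deriv (fun t => M t i j) x) x := by
    intro i j
    filter_upwards [hent i j] with x hx
    exact (hx.differentiableAt two_ne_zero).hasDerivAt
  have hDM : HasDerivAt M (deriv M x₀) x₀ := (hM.differentiableAt two_ne_zero).hasDerivAt
  have hder : ∀ i j, deriv (fun t => M t i j) x₀ = deriv M x₀ i j := by
    intro i j
    exact ((entryCLM i j).hasFDerivAt.comp_hasDerivAt x₀ hDM).deriv
  have ha0 : a x₀ = ε := by simp [ha, hM0, Matrix.one_apply]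
  have hb0 : b x₀ = 0 := by simp [hb, hM0, Matrix.one_apply]
  have hc0 : c x₀ = 0 := by simp [hc, hM0, Matrix.one_apply]
  have hd0 : d x₀ = ε := by simp [hd, hM0, Matrix.one_apply]
  have hdet2 : ∀ᶠ x in nhds x₀, a x * d x - b x * c x = 1 := by
    filter_upwards [hdet] with x hx
    rw [Matrix.det_fin_two] at hx; exact hx
  set G : ℝ → ℂ := fun x =>
    deriv a x * d x + a x * deriv d x - (deriv b x * c x + b x * deriv c x) with hG
  have hG0 : ∀ᶠ x in nhds x₀, G x = 0 := by
    filter_upwards [hdet2.eventually_nhds, hentD 0 0, hentD 0 1, hentD 1 0, hentD 1 1]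
      with x hx h00 h01 h10 h11
    have hF : HasDerivAt (fun y => a y * d y - b y * c y)
        (deriv a x * d x + a x * deriv d x - (deriv b x * c x + b x * deriv c x)) x :=
      (h00.mul h11).sub (h01.mul h10)
    have hF' : HasDerivAt (fun y => a y * d y - b y * c y) 0 x :=
      (hasDerivAt_const x (1:ℂ)).congr_of_eventuallyEq
        (by filter_upwards [hx] with y hy; exact hy)
    exact hF.unique hF'
  have hda : HasDerivAt a (deriv M x₀ 0 0) x₀ := by
    rw [← hder 0 0]; exact ((hent 0 0).self_of_nhds.differentiableAt two_ne_zero).hasDerivAt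
  have hdb : HasDerivAt b (deriv M x₀ 0 1) x₀ := by
    rw [← hder 0 1]; exact ((hent 0 1).self_of_nhds.differentiableAt two_ne_zero).hasDerivAt
  have hdc : HasDerivAt c (deriv M x₀ 1 0) x₀ := by
    rw [← hder 1 0]; exact ((hent 1 0).self_of_nhds.differentiableAt two_ne_zero).hasDerivAt
  have hdd : HasDerivAt d (deriv M x₀ 1 1) x₀ := by
    rw [← hder 1 1]; exact ((hent 1 1).self_of_nhds.differentiableAt two_ne_zero).hasDerivAt
  have hGx0 : G x₀ = 0 := hG0.self_of_nhds
  have htr1 : deriv M x₀ 0 0 + deriv M x₀ 1 1 = 0 := by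
    have h : deriv a x₀ * d x₀ + a x₀ * deriv d x₀ -
        (deriv b x₀ * c x₀ + b x₀ * deriv c x₀) = 0 := hGx0
    rw [ha0, hb0, hc0, hd0, hda.deriv, hdb.deriv, hdd.deriv] at h
    have hεtr : ε * (deriv M x₀ 0 0 + deriv M x₀ 1 1) = 0 := by linear_combination h
    exact (mul_eq_zero.mp hεtr).resolve_left hε0
  have hτder : ∀ᶠ x in nhds x₀,
      deriv (fun y => (1 / 2 : ℂ) * (M y).trace) x = (1/2) * (deriv a x + deriv d x) := by
    filter_upwards [hentD 0 0, hentD 1 1] with x h00 h11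
    have hT : HasDerivAt (fun y => (1 / 2 : ℂ) * (M y).trace)
        ((1/2) * (deriv a x + deriv d x)) x := by
      refine ((h00.add h11).const_mul (1/2 : ℂ)).congr_of_eventuallyEq ?_
      filter_upwards with y
      rw [Matrix.trace_fin_two]; rfl
    exact hT.deriv
  have goal1 : deriv (fun x => (1 / 2 : ℂ) * (M x).trace) x₀ = 0 := by
    rw [hτder.self_of_nhds, hda.deriv, hdd.deriv]
    linear_combination (1/2 : ℂ) * htr1
  have hda2 : HasDerivAt (deriv a) (deriv (deriv a) x₀) x₀ :=
    (diffAt_deriv (hent 0 0).self_of_nhds).hasDerivAt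
  have hdb2 : HasDerivAt (deriv b) (deriv (deriv b) x₀) x₀ :=
    (diffAt_deriv (hent 0 1).self_of_nhds).hasDerivAt
  have hdc2 : HasDerivAt (deriv c) (deriv (deriv c) x₀) x₀ :=
    (diffAt_deriv (hent 1 0).self_of_nhds).hasDerivAt
  have hdd2 : HasDerivAt (deriv d) (deriv (deriv d) x₀) x₀ :=
    (diffAt_deriv (hent 1 1).self_of_nhds).hasDerivAt
  have hGd : HasDerivAt G
      ((deriv (deriv a) x₀ * d x₀ + deriv a x₀ * deriv M x₀ 1 1) +
        (deriv M x₀ 0 0 * deriv d x₀ + a x₀ * deriv (deriv d) x₀) -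
        ((deriv (deriv b) x₀ * c x₀ + deriv b x₀ * deriv M x₀ 1 0) +
          (deriv M x₀ 0 1 * deriv c x₀ + b x₀ * deriv (deriv c) x₀))) x₀ :=
    ((hda2.mul hdd).add (hda.mul hdd2)).sub ((hdb2.mul hdc).add (hdb.mul hdc2))
  have hGd0 : HasDerivAt G 0 x₀ :=
    (hasDerivAt_const x₀ (0:ℂ)).congr_of_eventuallyEq
      (by filter_upwards [hG0] with y hy; exact hy)
  have hsecond : deriv (deriv a) x₀ * ε +
      2 * (deriv M x₀ 0 0 * deriv M x₀ 1 1) + ε * deriv (deriv d) x₀ -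
      2 * (deriv M x₀ 0 1 * deriv M x₀ 1 0) = 0 := by
    have h := hGd.unique hGd0
    rw [ha0, hb0, hc0, hd0, hda.deriv, hdb.deriv, hdc.deriv, hdd.deriv] at h
    linear_combination h
  have hτ2 : deriv (deriv (fun x => (1 / 2 : ℂ) * (M x).trace)) x₀ =
      (1/2) * (deriv (deriv a) x₀ + deriv (deriv d) x₀) := by
    have heq : deriv (fun x => (1 / 2 : ℂ) * (M x).trace)
        =ᶠ[nhds x₀] fun x => (1/2 : ℂ) * (deriv a x + deriv d x) := hτder
    rw [heq.deriv_eq]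
    exact ((hda2.add hdd2).const_mul _).deriv
  refine ⟨goal1, ?_⟩
  rw [hτ2]
  have hkey : ε * ((1/2 : ℂ) * (deriv (deriv a) x₀ + deriv (deriv d) x₀)) =
      deriv M x₀ 0 0 * deriv M x₀ 0 0 + deriv M x₀ 0 1 * deriv M x₀ 1 0 := by
    linear_combination (1/2 : ℂ) * hsecond - (deriv M x₀ 0 0) * htr1
  ext i j
  fin_cases i <;> fin_cases j <;>
    simp [pow_two, Matrix.mul_apply, Fin.sum_univ_two, Matrix.one_apply]
  · first
      | linear_combination hkey
      | linear_combination -hkey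
  · first
      | linear_combination (deriv M x₀ 0 1) * htr1
      | linear_combination (-(deriv M x₀ 0 1)) * htr1
  · first
      | linear_combination (deriv M x₀ 1 0) * htr1
      | linear_combination (-(deriv M x₀ 1 0)) * htr1
  · first
      | linear_combination hkey + (deriv M x₀ 1 1 - deriv M x₀ 0 0) * htr1
      | linear_combination -hkey - (deriv M x₀ 1 1 - deriv M x₀ 0 0) * htr1
      | linear_combination -hkey + (deriv M x₀ 1 1 - deriv M x₀ 0 0) * htr1
      | linear_combination hkey - (deriv M x₀ 1 1 - deriv M x₀ 0 0) * htr1
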